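/- Let X and Y be metric spaces with coarse coproduct X + Y and inclusions ι_X, ι_Y. Then the map F : B_h(X+Y)/B_0(X+Y) → (B_h(X)/B_0(X)) × (B_h(Y)/B_0(Y)) sending the class [f] to the pair ([f ∘ ι_X], [f ∘ ι_Y]) is a well-defined bijective unital star-algebra homomorphism. (Consequently the Higson corona preserves binary coarse coproducts.) -/

import Mathlib

set_option linter.unusedSectionVars false


open Bornology

def Bornologous {X Y : Type*} [PseudoMetricSpace X] [PseudoMetricSpace Y] (f : X → Y) : Prop :=
  ∀ R : ℝ, 0 < R → ∃ S : ℝ, 0 < S ∧ ∀ x x' : X, dist x x' ≤ R → dist (f x) (f x') ≤ S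

def ProperMap {X Y : Type*} [PseudoMetricSpace X] [PseudoMetricSpace Y] (f : X → Y) : Prop :=
  ∀ B : Set Y, IsBounded B → IsBounded (f ⁻¹' B)

def IsCoarse {X Y : Type*} [PseudoMetricSpace X] [PseudoMetricSpace Y] (f : X → Y) : Prop :=
  Bornologous f ∧ ProperMap f

def Close {X Y : Type*} [PseudoMetricSpace Y] (f g : X → Y) : Prop :=
  ∃ R : ℝ, 0 < R ∧ ∀ x : X, dist (f x) (g x) ≤ R

def coprodDist {X Y : Type*} [MetricSpace X] [MetricSpace Y] (x₀ : X) (y₀ : Y) :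
    X ⊕ Y → X ⊕ Y → ℝ
  | Sum.inl a, Sum.inl b => dist a b
  | Sum.inl a, Sum.inr b => dist a x₀ + 1 + dist y₀ b
  | Sum.inr a, Sum.inl b => dist b x₀ + 1 + dist y₀ a
  | Sum.inr a, Sum.inr b => dist a b

noncomputable def coprodMetric {X Y : Type*} [MetricSpace X] [MetricSpace Y]
    (x₀ : X) (y₀ : Y) : MetricSpace (X ⊕ Y) where
  dist := coprodDist x₀ y₀
  dist_self := by rintro (a | a) <;> simp [coprodDist]
  dist_comm := fun p q => by
    match p, q with
    | Sum.inl a, Sum.inl b => exact dist_comm a b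
    | Sum.inl a, Sum.inr b => rfl
    | Sum.inr a, Sum.inl b => rfl
    | Sum.inr a, Sum.inr b => exact dist_comm a b
  dist_triangle := fun p q r => by
    match p, q, r with
    | Sum.inl a, Sum.inl b, Sum.inl c => exact dist_triangle a b c
    | Sum.inl a, Sum.inl b, Sum.inr c =>
      show dist a x₀ + 1 + dist y₀ c ≤ dist a b + (dist b x₀ + 1 + dist y₀ c)
      have := dist_triangle a b x₀; linarith
    | Sum.inl a, Sum.inr b, Sum.inl c =>
      show dist a c ≤ (dist a x₀ + 1 + dist y₀ b) + (dist c x₀ + 1 + dist y₀ b)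
      have h1 := dist_triangle a x₀ c
      have h2 : dist x₀ c = dist c x₀ := dist_comm _ _
      have h3 := dist_nonneg (x := y₀) (y := b)
      linarith
    | Sum.inl a, Sum.inr b, Sum.inr c =>
      show dist a x₀ + 1 + dist y₀ c ≤ (dist a x₀ + 1 + dist y₀ b) + dist b c
      have := dist_triangle y₀ b c; linarith
    | Sum.inr a, Sum.inl b, Sum.inl c =>
      show dist c x₀ + 1 + dist y₀ a ≤ (dist b x₀ + 1 + dist y₀ a) + dist b c
      have h1 := dist_triangle c b x₀
      have h2 : dist c b = dist b c := dist_comm _ _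
      linarith
    | Sum.inr a, Sum.inl b, Sum.inr c =>
      show dist a c ≤ (dist b x₀ + 1 + dist y₀ a) + (dist b x₀ + 1 + dist y₀ c)
      have h1 := dist_triangle a y₀ c
      have h2 : dist a y₀ = dist y₀ a := dist_comm _ _
      have h3 := dist_nonneg (x := b) (y := x₀)
      linarith
    | Sum.inr a, Sum.inr b, Sum.inl c =>
      show dist c x₀ + 1 + dist y₀ a ≤ dist a b + (dist c x₀ + 1 + dist y₀ b)
      have h1 := dist_triangle y₀ b a
      have h2 : dist b a = dist a b := dist_comm _ _
      linarith
    | Sum.inr a, Sum.inr b, Sum.inr c => exact dist_triangle a b c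
  eq_of_dist_eq_zero := fun {p q} h => by
    match p, q, h with
    | Sum.inl a, Sum.inl b, h => exact congrArg Sum.inl (eq_of_dist_eq_zero h)
    | Sum.inl a, Sum.inr b, h =>
      exfalso
      have h1 := dist_nonneg (x := a) (y := x₀)
      have h2 := dist_nonneg (x := y₀) (y := b)
      have h' : dist a x₀ + 1 + dist y₀ b = 0 := h
      linarith
    | Sum.inr a, Sum.inl b, h =>
      exfalso
      have h1 := dist_nonneg (x := b) (y := x₀)
      have h2 := dist_nonneg (x := y₀) (y := a)
      have h' : dist b x₀ + 1 + dist y₀ a = 0 := h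
      linarith
    | Sum.inr a, Sum.inr b, h => exact congrArg Sum.inr (eq_of_dist_eq_zero h)

/-- Condition (C): every coarse map into a coarse coproduct factors, up to closeness,
through one of the coproduct injections. -/
def CondC (X : Type u) [MetricSpace X] : Prop :=
  ∀ (Y Z : Type u) [MetricSpace Y] [MetricSpace Z] (y₀ : Y) (z₀ : Z) (f : X → Y ⊕ Z),
    letI := coprodMetric y₀ z₀
    IsCoarse f →
      (∃ g : X → Y, IsCoarse g ∧ Close (Sum.inl ∘ g) f) ∨
      (∃ h : X → Z, IsCoarse h ∧ Close (Sum.inr ∘ h) f)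

def IsBoundedFn {W : Type*} (f : W → ℂ) : Prop :=
  ∃ C : ℝ, ∀ x : W, ‖f x‖ ≤ C

/-- A bounded function to `ℂ` is *slowly oscillating* if for all `ε > 0` and `R > 0` there is a
bounded set outside of which points at distance at most `R` have values at distance at most `ε`. -/
def SlowlyOscillating {W : Type*} [PseudoMetricSpace W] (f : W → ℂ) : Prop :=
  ∀ ε : ℝ, 0 < ε → ∀ R : ℝ, 0 < R → ∃ B : Set W, IsBounded B ∧
    ∀ x ∉ B, ∀ x' ∉ B, dist x x' ≤ R → ‖f x - f x'‖ ≤ ε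

/-- A function *tends to zero at infinity* if outside of suitable bounded sets it is
uniformly small. -/
def TendsToZeroAtInfinity {W : Type*} [PseudoMetricSpace W] (f : W → ℂ) : Prop :=
  ∀ ε : ℝ, 0 < ε → ∃ B : Set W, IsBounded B ∧ ∀ x ∉ B, ‖f x‖ ≤ ε

/-- Membership in `B_h(W)`: bounded and slowly oscillating. -/
def MemBh {W : Type*} [PseudoMetricSpace W] (f : W → ℂ) : Prop :=
  IsBoundedFn f ∧ SlowlyOscillating f

/-- Membership in `B_0(W)`: bounded and tending to zero at infinity. -/
def MemB0 {W : Type*} [PseudoMetricSpace W] (f : W → ℂ) : Prop :=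
  IsBoundedFn f ∧ TendsToZeroAtInfinity f

section Helpers

variable {W : Type*} [PseudoMetricSpace W]

lemma isBoundedFn_add {f g : W → ℂ} (hf : IsBoundedFn f) (hg : IsBoundedFn g) :
    IsBoundedFn (f + g) := by
  obtain ⟨C, hC⟩ := hf; obtain ⟨D, hD⟩ := hg
  exact ⟨C + D, fun x => le_trans (norm_add_le _ _) (add_le_add (hC x) (hD x))⟩

lemma isBoundedFn_mul {f g : W → ℂ} (hf : IsBoundedFn f) (hg : IsBoundedFn g) :
    IsBoundedFn (f * g) := by
  obtain ⟨C, hC⟩ := hf; obtain ⟨D, hD⟩ := hg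
  refine ⟨(|C| + 1) * (|D| + 1), fun x => ?_⟩
  have h1 : ‖f x‖ ≤ |C| + 1 :=
    le_trans (hC x) (le_trans (le_abs_self C) (by linarith))
  have h2 : ‖g x‖ ≤ |D| + 1 :=
    le_trans (hD x) (le_trans (le_abs_self D) (by linarith))
  have := norm_mul (f x) (g x)
  calc ‖f x * g x‖ = ‖f x‖ * ‖g x‖ := this
    _ ≤ (|C| + 1) * (|D| + 1) :=
      mul_le_mul h1 h2 (norm_nonneg _) (by positivity)

lemma isBoundedFn_smul (c : ℂ) {f : W → ℂ} (hf : IsBoundedFn f) :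
    IsBoundedFn (c • f) := by
  obtain ⟨C, hC⟩ := hf
  refine ⟨‖c‖ * C, fun x => ?_⟩
  have : ‖c * f x‖ = ‖c‖ * ‖f x‖ := norm_mul _ _
  calc ‖(c • f) x‖ = ‖c‖ * ‖f x‖ := this
    _ ≤ ‖c‖ * C := by
        exact mul_le_mul_of_nonneg_left (hC x) (norm_nonneg _)

lemma isBoundedFn_star {f : W → ℂ} (hf : IsBoundedFn f) : IsBoundedFn (star f) := by
  obtain ⟨C, hC⟩ := hf
  refine ⟨C, fun x => ?_⟩
  have : ‖(star f) x‖ = ‖f x‖ := Complex.norm_conj _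
  rw [this]; exact hC x

lemma isBoundedFn_neg {f : W → ℂ} (hf : IsBoundedFn f) : IsBoundedFn (-f) := by
  obtain ⟨C, hC⟩ := hf
  exact ⟨C, fun x => by simpa using hC x⟩

lemma isBoundedFn_sub {f g : W → ℂ} (hf : IsBoundedFn f) (hg : IsBoundedFn g) :
    IsBoundedFn (f - g) := by
  have := isBoundedFn_add hf (isBoundedFn_neg hg)
  simpa [sub_eq_add_neg] using this

lemma memBh_one : MemBh (1 : W → ℂ) := by
  constructor
  · exact ⟨1, fun x => by simp⟩
  · intro ε hε R _
    exact ⟨∅, Bornology.isBounded_empty, fun x _ x' _ _ => by simp [hε.le]⟩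

lemma slowlyOscillating_add {f g : W → ℂ} (hf : SlowlyOscillating f)
    (hg : SlowlyOscillating g) : SlowlyOscillating (f + g) := by
  intro ε hε R hR
  obtain ⟨B₁, hB₁, h₁⟩ := hf (ε / 2) (by linarith) R hR
  obtain ⟨B₂, hB₂, h₂⟩ := hg (ε / 2) (by linarith) R hR
  refine ⟨B₁ ∪ B₂, hB₁.union hB₂, fun x hx x' hx' hd => ?_⟩
  have hx1 : x ∉ B₁ := fun h => hx (Or.inl h)
  have hx2 : x ∉ B₂ := fun h => hx (Or.inr h)
  have hx1' : x' ∉ B₁ := fun h => hx' (Or.inl h)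
  have hx2' : x' ∉ B₂ := fun h => hx' (Or.inr h)
  have e : (f + g) x - (f + g) x' = (f x - f x') + (g x - g x') := by
    simp [Pi.add_apply]; ring
  rw [e]
  calc ‖(f x - f x') + (g x - g x')‖
      ≤ ‖f x - f x'‖ + ‖g x - g x'‖ := norm_add_le _ _
    _ ≤ ε / 2 + ε / 2 := add_le_add (h₁ x hx1 x' hx1' hd) (h₂ x hx2 x' hx2' hd)
    _ = ε := by ring

lemma slowlyOscillating_mul {f g : W → ℂ} (hfb : IsBoundedFn f) (hgb : IsBoundedFn g)
    (hf : SlowlyOscillating f) (hg : SlowlyOscillating g) : SlowlyOscillating (f * g) := by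
  intro ε hε R hR
  obtain ⟨Cf, hCf⟩ := hfb; obtain ⟨Cg, hCg⟩ := hgb
  set C : ℝ := |Cf| + |Cg| + 1 with hC
  have hCpos : 0 < C := by positivity
  have hfC : ∀ x, ‖f x‖ ≤ C := fun x =>
    (hCf x).trans (by rw [hC]; have := le_abs_self Cf; have := abs_nonneg Cg; linarith)
  have hgC : ∀ x, ‖g x‖ ≤ C := fun x =>
    (hCg x).trans (by rw [hC]; have := le_abs_self Cg; have := abs_nonneg Cf; linarith)
  obtain ⟨B₁, hB₁, h₁⟩ := hf (ε / (2 * C)) (by positivity) R hR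
  obtain ⟨B₂, hB₂, h₂⟩ := hg (ε / (2 * C)) (by positivity) R hR
  refine ⟨B₁ ∪ B₂, hB₁.union hB₂, fun x hx x' hx' hd => ?_⟩
  have hx1 : x ∉ B₁ := fun h => hx (Or.inl h)
  have hx2 : x ∉ B₂ := fun h => hx (Or.inr h)
  have hx1' : x' ∉ B₁ := fun h => hx' (Or.inl h)
  have hx2' : x' ∉ B₂ := fun h => hx' (Or.inr h)
  have e : (f * g) x - (f * g) x' = f x * (g x - g x') + (f x - f x') * g x' := by
    simp [Pi.mul_apply]; ring
  rw [e]
  have t1 : ‖f x * (g x - g x')‖ ≤ C * (ε / (2 * C)) := by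
    rw [norm_mul]
    exact mul_le_mul (hfC x) (h₂ x hx2 x' hx2' hd) (norm_nonneg _) hCpos.le
  have t2 : ‖(f x - f x') * g x'‖ ≤ (ε / (2 * C)) * C := by
    rw [norm_mul]
    exact mul_le_mul (h₁ x hx1 x' hx1' hd) (hgC x') (norm_nonneg _) (by positivity)
  calc ‖f x * (g x - g x') + (f x - f x') * g x'‖
      ≤ ‖f x * (g x - g x')‖ + ‖(f x - f x') * g x'‖ :=
        norm_add_le _ _
    _ ≤ C * (ε / (2 * C)) + (ε / (2 * C)) * C := add_le_add t1 t2
    _ = ε := by field_simp; ring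

lemma slowlyOscillating_smul (c : ℂ) {f : W → ℂ} (hf : SlowlyOscillating f) :
    SlowlyOscillating (c • f) := by
  intro ε hε R hR
  obtain ⟨B, hB, h⟩ := hf (ε / (‖c‖ + 1)) (by positivity) R hR
  refine ⟨B, hB, fun x hx x' hx' hd => ?_⟩
  have e : (c • f) x - (c • f) x' = c * (f x - f x') := by
    simp [Pi.smul_apply]; ring
  rw [e, norm_mul]
  have h1 : ‖c‖ ≤ ‖c‖ + 1 := by linarith
  calc ‖c‖ * ‖f x - f x'‖
      ≤ (‖c‖ + 1) * (ε / (‖c‖ + 1)) :=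
        mul_le_mul h1 (h x hx x' hx' hd) (norm_nonneg _) (by positivity)
    _ = ε := by field_simp

lemma slowlyOscillating_star {f : W → ℂ} (hf : SlowlyOscillating f) :
    SlowlyOscillating (star f) := by
  intro ε hε R hR
  obtain ⟨B, hB, h⟩ := hf ε hε R hR
  refine ⟨B, hB, fun x hx x' hx' hd => ?_⟩
  have e : (star f) x - (star f) x' = star (f x - f x') := by
    simp [Pi.star_apply]
  rw [e]
  have : ‖star (f x - f x')‖ = ‖f x - f x'‖ :=
    Complex.norm_conj _
  rw [this]; exact h x hx x' hx' hd

lemma memBh_of_memB0' {f : W → ℂ} (hf : MemB0 f) : MemBh f := by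
  refine ⟨hf.1, fun ε hε R _ => ?_⟩
  obtain ⟨B, hB, h⟩ := hf.2 (ε / 2) (by linarith)
  refine ⟨B, hB, fun x hx x' hx' _ => ?_⟩
  calc ‖f x - f x'‖ ≤ ‖f x‖ + ‖f x'‖ := by
        simpa [sub_eq_add_neg] using norm_add_le (f x) (-(f x'))
    _ ≤ ε / 2 + ε / 2 := add_le_add (h x hx) (h x' hx')
    _ = ε := by ring

lemma memB0_add' {f g : W → ℂ} (hf : MemB0 f) (hg : MemB0 g) : MemB0 (f + g) := by
  refine ⟨isBoundedFn_add hf.1 hg.1, fun ε hε => ?_⟩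
  obtain ⟨B₁, hB₁, h₁⟩ := hf.2 (ε / 2) (by linarith)
  obtain ⟨B₂, hB₂, h₂⟩ := hg.2 (ε / 2) (by linarith)
  refine ⟨B₁ ∪ B₂, hB₁.union hB₂, fun x hx => ?_⟩
  have hx1 : x ∉ B₁ := fun h => hx (Or.inl h)
  have hx2 : x ∉ B₂ := fun h => hx (Or.inr h)
  calc ‖(f + g) x‖ ≤ ‖f x‖ + ‖g x‖ :=
        norm_add_le _ _
    _ ≤ ε / 2 + ε / 2 := add_le_add (h₁ x hx1) (h₂ x hx2)
    _ = ε := by ring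

lemma memB0_mul' {f g : W → ℂ} (hf : MemBh f) (hg : MemB0 g) : MemB0 (f * g) := by
  refine ⟨isBoundedFn_mul hf.1 hg.1, fun ε hε => ?_⟩
  obtain ⟨Cf, hCf⟩ := hf.1
  set C : ℝ := |Cf| + 1 with hC
  have hCpos : 0 < C := by positivity
  have hfC : ∀ x, ‖f x‖ ≤ C := fun x =>
    (hCf x).trans (by rw [hC]; have := le_abs_self Cf; linarith)
  obtain ⟨B, hB, h⟩ := hg.2 (ε / C) (by positivity)
  refine ⟨B, hB, fun x hx => ?_⟩
  calc ‖(f * g) x‖ = ‖f x‖ * ‖g x‖ := norm_mul _ _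
    _ ≤ C * (ε / C) := mul_le_mul (hfC x) (h x hx) (norm_nonneg _) hCpos.le
    _ = ε := by field_simp

lemma memB0_smul' (c : ℂ) {f : W → ℂ} (hf : MemB0 f) : MemB0 (c • f) := by
  refine ⟨isBoundedFn_smul c hf.1, fun ε hε => ?_⟩
  obtain ⟨B, hB, h⟩ := hf.2 (ε / (‖c‖ + 1)) (by positivity)
  refine ⟨B, hB, fun x hx => ?_⟩
  have e : ‖(c • f) x‖ = ‖c‖ * ‖f x‖ := norm_mul _ _
  rw [e]
  calc ‖c‖ * ‖f x‖
      ≤ (‖c‖ + 1) * (ε / (‖c‖ + 1)) :=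
        mul_le_mul (by linarith) (h x hx) (norm_nonneg _) (by positivity)
    _ = ε := by field_simp

lemma memB0_star' {f : W → ℂ} (hf : MemB0 f) : MemB0 (star f) := by
  refine ⟨isBoundedFn_star hf.1, fun ε hε => ?_⟩
  obtain ⟨B, hB, h⟩ := hf.2 ε hε
  refine ⟨B, hB, fun x hx => ?_⟩
  have : ‖(star f) x‖ = ‖f x‖ := Complex.norm_conj _
  rw [this]; exact h x hx

end Helpers

section Coprod

variable {X Y : Type*} [MetricSpace X] [MetricSpace Y] (x₀ : X) (y₀ : Y)

lemma coprod_dist_inl (a b : X) :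
    letI := coprodMetric x₀ y₀
    dist (Sum.inl a : X ⊕ Y) (Sum.inl b) = dist a b := rfl

lemma coprod_dist_inr (a b : Y) :
    letI := coprodMetric x₀ y₀
    dist (Sum.inr a : X ⊕ Y) (Sum.inr b) = dist a b := rfl

lemma coprod_dist_inl_inr (a : X) (b : Y) :
    letI := coprodMetric x₀ y₀
    dist (Sum.inl a : X ⊕ Y) (Sum.inr b) = dist a x₀ + 1 + dist y₀ b := rfl

lemma coprod_dist_inr_inl (a : Y) (b : X) :
    letI := coprodMetric x₀ y₀
    dist (Sum.inr a : X ⊕ Y) (Sum.inl b) = dist b x₀ + 1 + dist y₀ a := rfl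

lemma coprod_isBounded_iff (B : Set (X ⊕ Y)) :
    letI := coprodMetric x₀ y₀
    (IsBounded B ↔ IsBounded (Sum.inl ⁻¹' B : Set X) ∧ IsBounded (Sum.inr ⁻¹' B : Set Y)) := by
  letI := coprodMetric x₀ y₀
  constructor
  · intro hB
    obtain ⟨C, hC⟩ := Metric.isBounded_iff.mp hB
    constructor
    · rw [Metric.isBounded_iff]
      exact ⟨C, fun {a} ha {b} hb => by
        have := hC (x := Sum.inl a) ha (y := Sum.inl b) hb
        simpa [coprod_dist_inl x₀ y₀ a b] using this⟩
    · rw [Metric.isBounded_iff]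
      exact ⟨C, fun {a} ha {b} hb => by
        have := hC (x := Sum.inr a) ha (y := Sum.inr b) hb
        simpa [coprod_dist_inr x₀ y₀ a b] using this⟩
  · rintro ⟨h₁, h₂⟩
    obtain ⟨r₁, hr₁⟩ := (Metric.isBounded_iff_subset_closedBall x₀).mp h₁
    obtain ⟨r₂, hr₂⟩ := (Metric.isBounded_iff_subset_closedBall y₀).mp h₂
    have : B ⊆ Metric.closedBall (Sum.inl x₀ : X ⊕ Y) (|r₁| + |r₂| + 1) := by
      rintro (a | b) hp
      · have ha : a ∈ Metric.closedBall x₀ r₁ := hr₁ hp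
        have : dist (Sum.inl a : X ⊕ Y) (Sum.inl x₀) = dist a x₀ := rfl
        simp only [Metric.mem_closedBall] at ha ⊢
        rw [this]
        have := le_abs_self r₁
        have := abs_nonneg r₂
        linarith [ha]
      · have hb : b ∈ Metric.closedBall y₀ r₂ := hr₂ hp
        have e : dist (Sum.inr b : X ⊕ Y) (Sum.inl x₀) = dist x₀ x₀ + 1 + dist y₀ b := rfl
        simp only [Metric.mem_closedBall] at hb ⊢
        rw [e, dist_self]
        have := le_abs_self r₂
        have := abs_nonneg r₁
        have hcomm : dist y₀ b = dist b y₀ := dist_comm _ _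
        linarith [hb]
    exact (Metric.isBounded_closedBall).subset this

lemma preimage_inl_image (S : Set X) (T : Set Y) :
    (Sum.inl ⁻¹' (Sum.inl '' S ∪ Sum.inr '' T) : Set X) = S := by
  ext a; simp

lemma preimage_inr_image (S : Set X) (T : Set Y) :
    (Sum.inr ⁻¹' (Sum.inl '' S ∪ Sum.inr '' T) : Set Y) = T := by
  ext a; simp

end Coprod

/-- restriction along the two inclusions induces a well-defined bijective unital
star-algebra homomorphism `B_h(X+Y)/B_0(X+Y) → (B_h(X)/B_0(X)) × (B_h(Y)/B_0(Y))`, stated here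
at the level of representatives: `B_h` is a unital star-subalgebra and `B_0` a star-closed
ideal; restriction preserves `B_h` and `B_0` (well-definedness) and all algebra operations
(homomorphism); and the induced map on classes is injective and surjective. -/
theorem higson_corona_preserves_coproducts {X Y : Type*} [MetricSpace X] [MetricSpace Y]
    (x₀ : X) (y₀ : Y) :
    letI := coprodMetric x₀ y₀
    -- `B_h` is a unital star-subalgebra of the functions on `X ⊕ Y`,
    -- and `B_0` is a star-closed ideal of `B_h`:
    (MemBh (1 : X ⊕ Y → ℂ)
      ∧ (∀ f g : X ⊕ Y → ℂ, MemBh f → MemBh g → MemBh (f + g) ∧ MemBh (f * g))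
      ∧ (∀ (c : ℂ) (f : X ⊕ Y → ℂ), MemBh f → MemBh (c • f))
      ∧ (∀ f : X ⊕ Y → ℂ, MemBh f → MemBh (star f))
      ∧ (∀ f : X ⊕ Y → ℂ, MemB0 f → MemBh f)
      ∧ (∀ f g : X ⊕ Y → ℂ, MemB0 f → MemB0 g → MemB0 (f + g))
      ∧ (∀ f g : X ⊕ Y → ℂ, MemBh f → MemB0 g → MemB0 (f * g))
      ∧ (∀ (c : ℂ) (f : X ⊕ Y → ℂ), MemB0 f → MemB0 (c • f))
      ∧ (∀ f : X ⊕ Y → ℂ, MemB0 f → MemB0 (star f))) ∧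
    -- the map F is well defined:
    (∀ f : X ⊕ Y → ℂ, MemBh f → MemBh (f ∘ Sum.inl) ∧ MemBh (f ∘ Sum.inr)) ∧
    (∀ f : X ⊕ Y → ℂ, MemB0 f → MemB0 (f ∘ Sum.inl) ∧ MemB0 (f ∘ Sum.inr)) ∧
    -- F is a unital star-algebra homomorphism (on representatives):
    ((1 : X ⊕ Y → ℂ) ∘ Sum.inl = 1 ∧ (1 : X ⊕ Y → ℂ) ∘ Sum.inr = 1
      ∧ (∀ f g : X ⊕ Y → ℂ, (f + g) ∘ Sum.inl = f ∘ Sum.inl + g ∘ Sum.inl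
          ∧ (f + g) ∘ Sum.inr = f ∘ Sum.inr + g ∘ Sum.inr)
      ∧ (∀ f g : X ⊕ Y → ℂ, (f * g) ∘ Sum.inl = (f ∘ Sum.inl) * (g ∘ Sum.inl)
          ∧ (f * g) ∘ Sum.inr = (f ∘ Sum.inr) * (g ∘ Sum.inr))
      ∧ (∀ (c : ℂ) (f : X ⊕ Y → ℂ), (c • f) ∘ Sum.inl = c • (f ∘ Sum.inl)
          ∧ (c • f) ∘ Sum.inr = c • (f ∘ Sum.inr))
      ∧ (∀ f : X ⊕ Y → ℂ, (star f) ∘ Sum.inl = star (f ∘ Sum.inl)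
          ∧ (star f) ∘ Sum.inr = star (f ∘ Sum.inr))) ∧
    -- F is injective:
    (∀ f g : X ⊕ Y → ℂ, MemBh f → MemBh g →
      MemB0 (f ∘ Sum.inl - g ∘ Sum.inl) → MemB0 (f ∘ Sum.inr - g ∘ Sum.inr) →
      MemB0 (f - g)) ∧
    -- F is surjective:
    (∀ (u : X → ℂ) (v : Y → ℂ), MemBh u → MemBh v →
      ∃ f : X ⊕ Y → ℂ, MemBh f ∧ MemB0 (f ∘ Sum.inl - u) ∧ MemB0 (f ∘ Sum.inr - v)) := by
  letI := coprodMetric x₀ y₀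
  refine ⟨⟨memBh_one, fun f g hf hg =>
      ⟨⟨isBoundedFn_add hf.1 hg.1, slowlyOscillating_add hf.2 hg.2⟩,
       ⟨isBoundedFn_mul hf.1 hg.1, slowlyOscillating_mul hf.1 hg.1 hf.2 hg.2⟩⟩,
      fun c f hf => ⟨isBoundedFn_smul c hf.1, slowlyOscillating_smul c hf.2⟩,
      fun f hf => ⟨isBoundedFn_star hf.1, slowlyOscillating_star hf.2⟩,
      fun f hf => memBh_of_memB0' hf,
      fun f g hf hg => memB0_add' hf hg,
      fun f g hf hg => memB0_mul' hf hg,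
      fun c f hf => memB0_smul' c hf,
      fun f hf => memB0_star' hf⟩, ?_, ?_, ?_, ?_, ?_⟩
  · -- restriction preserves Bh
    intro f hf
    obtain ⟨⟨C, hC⟩, hso⟩ := hf
    constructor
    · refine ⟨⟨C, fun x => hC (Sum.inl x)⟩, fun ε hε R hR => ?_⟩
      obtain ⟨B, hB, h⟩ := hso ε hε R hR
      refine ⟨Sum.inl ⁻¹' B, ((coprod_isBounded_iff x₀ y₀ B).mp hB).1,
        fun x hx x' hx' hd => ?_⟩
      exact h (Sum.inl x) hx (Sum.inl x') hx' (by rwa [coprod_dist_inl x₀ y₀])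
    · refine ⟨⟨C, fun x => hC (Sum.inr x)⟩, fun ε hε R hR => ?_⟩
      obtain ⟨B, hB, h⟩ := hso ε hε R hR
      refine ⟨Sum.inr ⁻¹' B, ((coprod_isBounded_iff x₀ y₀ B).mp hB).2,
        fun x hx x' hx' hd => ?_⟩
      exact h (Sum.inr x) hx (Sum.inr x') hx' (by rwa [coprod_dist_inr x₀ y₀])
  · -- restriction preserves B0
    intro f hf
    obtain ⟨⟨C, hC⟩, hz⟩ := hf
    constructor
    · refine ⟨⟨C, fun x => hC (Sum.inl x)⟩, fun ε hε => ?_⟩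
      obtain ⟨B, hB, h⟩ := hz ε hε
      exact ⟨Sum.inl ⁻¹' B, ((coprod_isBounded_iff x₀ y₀ B).mp hB).1,
        fun x hx => h (Sum.inl x) hx⟩
    · refine ⟨⟨C, fun x => hC (Sum.inr x)⟩, fun ε hε => ?_⟩
      obtain ⟨B, hB, h⟩ := hz ε hε
      exact ⟨Sum.inr ⁻¹' B, ((coprod_isBounded_iff x₀ y₀ B).mp hB).2,
        fun x hx => h (Sum.inr x) hx⟩
  · -- homomorphism identities
    exact ⟨rfl, rfl, fun f g => ⟨rfl, rfl⟩, fun f g => ⟨rfl, rfl⟩,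
      fun c f => ⟨rfl, rfl⟩, fun f => ⟨rfl, rfl⟩⟩
  · -- injectivity
    intro f g hf hg h₁ h₂
    refine ⟨isBoundedFn_sub hf.1 hg.1, fun ε hε => ?_⟩
    obtain ⟨B₁, hB₁, hb₁⟩ := h₁.2 ε hε
    obtain ⟨B₂, hB₂, hb₂⟩ := h₂.2 ε hε
    refine ⟨Sum.inl '' B₁ ∪ Sum.inr '' B₂, ?_, ?_⟩
    · rw [coprod_isBounded_iff x₀ y₀]
      rw [preimage_inl_image, preimage_inr_image]
      exact ⟨hB₁, hB₂⟩
    · rintro (a | b) hp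
      · have ha : a ∉ B₁ := fun h => hp (Or.inl ⟨a, h, rfl⟩)
        exact hb₁ a ha
      · have hb : b ∉ B₂ := fun h => hp (Or.inr ⟨b, h, rfl⟩)
        exact hb₂ b hb
  · -- surjectivity
    intro u v hu hv
    refine ⟨Sum.elim u v, ⟨⟨?_, ?_⟩, ?_, ?_⟩⟩
    · obtain ⟨Cu, hCu⟩ := hu.1
      obtain ⟨Cv, hCv⟩ := hv.1
      refine ⟨max Cu Cv, ?_⟩
      rintro (a | b)
      · exact le_trans (hCu a) (le_max_left _ _)
      · exact le_trans (hCv b) (le_max_right _ _)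
    · intro ε hε R hR
      obtain ⟨Bu, hBu, hu'⟩ := hu.2 ε hε R hR
      obtain ⟨Bv, hBv, hv'⟩ := hv.2 ε hε R hR
      refine ⟨Sum.inl '' (Bu ∪ Metric.closedBall x₀ R) ∪
        Sum.inr '' (Bv ∪ Metric.closedBall y₀ R), ?_, ?_⟩
      · rw [coprod_isBounded_iff x₀ y₀, preimage_inl_image, preimage_inr_image]
        exact ⟨hBu.union Metric.isBounded_closedBall, hBv.union Metric.isBounded_closedBall⟩
      · rintro (a | b) hp (a' | b') hq hd
        · have ha : a ∉ Bu := fun h => hp (Or.inl ⟨a, Or.inl h, rfl⟩)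
          have ha' : a' ∉ Bu := fun h => hq (Or.inl ⟨a', Or.inl h, rfl⟩)
          exact hu' a ha a' ha' (by rwa [coprod_dist_inl x₀ y₀] at hd)
        · exfalso
          apply hp
          rw [coprod_dist_inl_inr x₀ y₀] at hd
          have h1 : dist y₀ b' ≥ 0 := dist_nonneg
          have h2 : dist a x₀ ≤ R := by linarith
          exact Or.inl ⟨a, Or.inr (Metric.mem_closedBall.mpr h2), rfl⟩
        · exfalso
          apply hp
          rw [coprod_dist_inr_inl x₀ y₀] at hd
          have h1 : dist a' x₀ ≥ 0 := dist_nonneg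
          have h2 : dist y₀ b ≤ R := by linarith
          exact Or.inr ⟨b, Or.inr (Metric.mem_closedBall.mpr (by
            rwa [dist_comm] at h2)), rfl⟩
        · have hb : b ∉ Bv := fun h => hp (Or.inr ⟨b, Or.inl h, rfl⟩)
          have hb' : b' ∉ Bv := fun h => hq (Or.inr ⟨b', Or.inl h, rfl⟩)
          exact hv' b hb b' hb' (by rwa [coprod_dist_inr x₀ y₀] at hd)
    · have e : Sum.elim u v ∘ Sum.inl - u = 0 := by ext a; simp
      rw [e]
      exact ⟨⟨0, fun x => by simp⟩, fun ε hε =>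
        ⟨∅, Bornology.isBounded_empty, fun x _ => by simp [hε.le]⟩⟩
    · have e : Sum.elim u v ∘ Sum.inr - v = 0 := by ext a; simp
      rw [e]
      exact ⟨⟨0, fun x => by simp⟩, fun ε hε =>
        ⟨∅, Bornology.isBounded_empty, fun x _ => by simp [hε.le]⟩⟩
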